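/- For every integer j ≥ 1 and α = 1, the operator T f(x) = ∫₀^{2π} (f(x) − f(x−y))/sin(y/2) dy acts diagonally on Fourier modes: T(cos(j·)) (x) = λ_j cos(jx) and T(sin(j·))(x) = λ_j sin(jx) with λ_j = Σ_{m=1}^{j} 8/(2m−1); in particular λ_j ≥ c log(1+j) and λ_j ≤ C(1 + log j) for constants c, C > 0. -/

import Mathlib

open intervalIntegral Real Finset MeasureTheory

private lemma step1 (u s : ℝ) : Real.cos (u - s) - Real.cos (u + s) = 2 * Real.sin u * Real.sin s := by
  rw [Real.cos_sub, Real.cos_add]; ring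

private lemma step2 (u s : ℝ) : Real.sin (u + s) - Real.sin (u - s) = 2 * Real.cos u * Real.sin s := by
  rw [Real.sin_sub, Real.sin_add]; ring

private lemma trigA (j : ℕ) (y : ℝ) :
    1 - Real.cos (j * y) = ∑ m ∈ Finset.range j, 2 * Real.sin ((2*(m:ℝ)+1)*y/2) * Real.sin (y/2) := by
  induction j with
  | zero => simp
  | succ j ih =>
    rw [Finset.sum_range_succ, ← ih]
    have h := step1 ((2*(j:ℝ)+1)*y/2) (y/2)
    rw [show (2*(j:ℝ)+1)*y/2 - y/2 = (j:ℝ)*y by ring,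
        show (2*(j:ℝ)+1)*y/2 + y/2 = ((j:ℝ)+1)*y by ring] at h
    push_cast
    linarith [h]

private lemma trigB (j : ℕ) (y : ℝ) :
    Real.sin (j * y) = ∑ m ∈ Finset.range j, 2 * Real.cos ((2*(m:ℝ)+1)*y/2) * Real.sin (y/2) := by
  induction j with
  | zero => simp
  | succ j ih =>
    rw [Finset.sum_range_succ, ← ih]
    have h := step2 ((2*(j:ℝ)+1)*y/2) (y/2)
    rw [show (2*(j:ℝ)+1)*y/2 - y/2 = (j:ℝ)*y by ring,
        show (2*(j:ℝ)+1)*y/2 + y/2 = ((j:ℝ)+1)*y by ring] at h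
    push_cast
    linarith [h]

private lemma ae_sin_ne : ∀ᵐ y : ℝ, Real.sin (y/2) ≠ 0 := by
  have hsub : {y : ℝ | Real.sin (y/2) = 0} ⊆ Set.range (fun n : ℤ => (n:ℝ) * (2*Real.pi)) := by
    intro y hy
    obtain ⟨n, hn⟩ := Real.sin_eq_zero_iff.mp hy
    exact ⟨n, show (n:ℝ)*(2*Real.pi) = y by rw [show (n:ℝ)*(2*Real.pi) = 2*((n:ℝ)*Real.pi) by ring, hn]; ring⟩
  have hz : volume {y : ℝ | Real.sin (y/2) = 0} = 0 :=
    measure_mono_null hsub (Set.Countable.measure_zero (Set.countable_range _) _)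
  exact (MeasureTheory.ae_iff).mpr (by simpa using hz)

private lemma intSin (m : ℕ) :
    (∫ y in (0:ℝ)..(2*Real.pi), Real.sin ((2*(m:ℝ)+1)*y/2)) = 4/(2*(m:ℝ)+1) := by
  have hc : (2*(m:ℝ)+1)/2 ≠ 0 := by positivity
  have harg : ∀ y : ℝ, (2*(m:ℝ)+1)*y/2 = ((2*(m:ℝ)+1)/2) * y := fun y => by ring
  simp_rw [harg]
  rw [integral_comp_mul_left Real.sin hc, integral_sin]
  rw [show ((2*(m:ℝ)+1)/2) * (2*Real.pi) = (m:ℝ) * (2*Real.pi) + Real.pi by ring]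
  rw [show ((m:ℝ) * (2*Real.pi) + Real.pi) = ((m:ℕ):ℝ) * (2*Real.pi) + Real.pi by norm_num,
      Real.cos_nat_mul_two_pi_add_pi, mul_zero, Real.cos_zero]
  have h1 : (2*(m:ℝ)+1) ≠ 0 := by positivity
  field_simp
  ring_nf
  have h2 : (1 + (m:ℝ)*2) ≠ 0 := by positivity
  field_simp
  ring

private lemma intCos (m : ℕ) :
    (∫ y in (0:ℝ)..(2*Real.pi), Real.cos ((2*(m:ℝ)+1)*y/2)) = 0 := by
  have hc : (2*(m:ℝ)+1)/2 ≠ 0 := by positivity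
  have harg : ∀ y : ℝ, (2*(m:ℝ)+1)*y/2 = ((2*(m:ℝ)+1)/2) * y := fun y => by ring
  simp_rw [harg]
  rw [integral_comp_mul_left Real.cos hc, integral_cos]
  rw [show ((2*(m:ℝ)+1)/2) * (2*Real.pi) = ((2*(m:ℕ)+1 : ℤ):ℝ) * Real.pi by push_cast; ring,
      Real.sin_int_mul_pi, mul_zero, Real.sin_zero]
  simp

private lemma key (j : ℕ) (a b : ℝ) :
    (∫ y in (0:ℝ)..(2*Real.pi), (a*(1 - Real.cos (j*y)) - b * Real.sin (j*y))/Real.sin (y/2))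
      = (∑ m ∈ Finset.range j, 8 / (2*(m:ℝ)+1)) * a := by
  have hcongr : (∫ y in (0:ℝ)..(2*Real.pi), (a*(1 - Real.cos (j*y)) - b * Real.sin (j*y))/Real.sin (y/2))
      = ∫ y in (0:ℝ)..(2*Real.pi),
          (∑ m ∈ Finset.range j, (2*a*Real.sin ((2*(m:ℝ)+1)*y/2) - 2*b*Real.cos ((2*(m:ℝ)+1)*y/2))) := by
    apply intervalIntegral.integral_congr_ae
    filter_upwards [ae_sin_ne] with y hy _
    rw [trigA j y, trigB j y, div_eq_iff hy, Finset.sum_mul, Finset.mul_sum, Finset.mul_sum,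
      ← Finset.sum_sub_distrib]
    exact Finset.sum_congr rfl (fun m _ => by ring)
  rw [hcongr, intervalIntegral.integral_finset_sum]
  · have hterm : ∀ m ∈ Finset.range j,
        (∫ y in (0:ℝ)..(2*Real.pi), (2*a*Real.sin ((2*(m:ℝ)+1)*y/2) - 2*b*Real.cos ((2*(m:ℝ)+1)*y/2)))
          = 8/(2*(m:ℝ)+1) * a := by
      intro m _
      rw [intervalIntegral.integral_sub ((Continuous.intervalIntegrable (by fun_prop) _ _))
          ((Continuous.intervalIntegrable (by fun_prop) _ _)),
        intervalIntegral.integral_const_mul, intervalIntegral.integral_const_mul, intSin, intCos]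
      have h1 : (2*(m:ℝ)+1) ≠ 0 := by positivity
      field_simp
      ring
    rw [Finset.sum_congr rfl hterm, Finset.sum_mul]
  · intro m _
    exact (Continuous.intervalIntegrable (by fun_prop) _ _)

theorem log_operator_diagonal :
    (∀ j : ℕ, 1 ≤ j → ∀ x : ℝ,
      (∫ y in (0:ℝ)..(2 * Real.pi),
          (Real.cos (j * x) - Real.cos (j * (x - y))) / Real.sin (y / 2)
        = (∑ m ∈ Finset.range j, 8 / (2 * (m : ℝ) + 1)) * Real.cos (j * x)) ∧
      (∫ y in (0:ℝ)..(2 * Real.pi),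
          (Real.sin (j * x) - Real.sin (j * (x - y))) / Real.sin (y / 2)
        = (∑ m ∈ Finset.range j, 8 / (2 * (m : ℝ) + 1)) * Real.sin (j * x))) ∧
    ∃ c > (0:ℝ), ∃ C > (0:ℝ), ∀ j : ℕ, 1 ≤ j →
      c * Real.log (1 + j) ≤ ∑ m ∈ Finset.range j, 8 / (2 * (m : ℝ) + 1) ∧
      ∑ m ∈ Finset.range j, 8 / (2 * (m : ℝ) + 1) ≤ C * (1 + Real.log j) := by
  constructor
  · intro j hj x
    have harg : ∀ y : ℝ, (j:ℝ)*(x-y) = (j:ℝ)*x - (j:ℝ)*y := fun y => by ring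
    constructor
    · have h := key j (Real.cos (j*x)) (Real.sin (j*x))
      rw [← h]
      apply intervalIntegral.integral_congr
      intro y _
      dsimp only
      rw [harg y, Real.cos_sub]
      ring
    · have h := key j (Real.sin (j*x)) (-(Real.cos (j*x)))
      rw [← h]
      apply intervalIntegral.integral_congr
      intro y _
      dsimp only
      rw [harg y, Real.sin_sub]
      ring
  · refine ⟨4, by norm_num, 8, by norm_num, fun j hj => ?_⟩
    have hharm : ((harmonic j : ℚ) : ℝ) = ∑ m ∈ Finset.range j, ((m:ℝ)+1)⁻¹ := by
      rw [harmonic]; push_cast; rfl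
    constructor
    · have hlog : Real.log (1 + j) ≤ ((harmonic j : ℚ) : ℝ) := by
        have h := log_add_one_le_harmonic j
        push_cast at h
        rwa [add_comm (1:ℝ)]
      have hsum : 4 * ((harmonic j : ℚ) : ℝ) ≤ ∑ m ∈ Finset.range j, 8 / (2*(m:ℝ)+1) := by
        rw [hharm, Finset.mul_sum]
        apply Finset.sum_le_sum
        intro m _
        rw [← div_eq_mul_inv, div_le_div_iff₀ (by positivity) (by positivity)]
        nlinarith [Nat.cast_nonneg (α := ℝ) m]
      linarith
    · have hlog : ((harmonic j : ℚ) : ℝ) ≤ 1 + Real.log j := harmonic_le_one_add_log j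
      have hsum : (∑ m ∈ Finset.range j, 8 / (2*(m:ℝ)+1)) ≤ 8 * ((harmonic j : ℚ) : ℝ) := by
        rw [hharm, Finset.mul_sum]
        apply Finset.sum_le_sum
        intro m _
        rw [← div_eq_mul_inv, div_le_div_iff₀ (by positivity) (by positivity)]
        nlinarith [Nat.cast_nonneg (α := ℝ) m]
      linarith
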